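/- Let λ > 2 and let σ > 1/2 be real. For every z in the closure of 𝓔₁ the following hold: 1 − nλz ≠ 0 for every integer n ≥ 1, and the series ∑_{n≥1} |1 − nλz|^{−2σ} converges (the family n ↦ |1 − nλz|^{−2σ} is summable). In particular, for s ∈ ℂ with Re s > 1/2 the series of weights appearing in the transfer operator, ∑_{n≥1} |1 − nλz|^{−2·Re s}, converges on the closure of 𝓔₁. -/

import Mathlib

/-- For `λ > 2` and real `σ > 1/2`, for every `z` in the closure of `𝓔₁`
the denominators `1 − nλz` (`n ≥ 1`) do not vanish and the series
`∑_{n≥1} |1 − nλz|^{−2σ}` converges; in particular, for `s ∈ ℂ` with `Re s > 1/2` the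
series of transfer-operator weights `∑_{n≥1} |1 − nλz|^{−2 Re s}` converges. -/
theorem transfer_weights_summable
    (lam : ℝ) (hlam : 2 < lam) (σ : ℝ) (hσ : 1 / 2 < σ)
    (E1 : Set ℂ)
    (hE1 : E1 = Metric.ball ((((2 * lam) / ((lam + 2) * (lam - 2)) : ℝ)) : ℂ)
      (4 / ((lam + 2) * (lam - 2)))) :
    ∀ z ∈ closure E1,
      (∀ n : ℕ, 1 ≤ n → (1 : ℂ) - (n : ℂ) * lam * z ≠ 0) ∧
      Summable (fun n : ℕ =>
        (‖(1 : ℂ) - ((n : ℂ) + 1) * lam * z‖) ^ (-(2 * σ))) ∧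
      (∀ s : ℂ, 1 / 2 < s.re → Summable (fun n : ℕ =>
        (‖(1 : ℂ) - ((n : ℂ) + 1) * lam * z‖) ^ (-(2 * s.re)))) := by
  intro z hz
  have hl2 : (0:ℝ) < lam + 2 := by linarith
  have hlm2 : (0:ℝ) < lam - 2 := by linarith
  have hden : (0:ℝ) < (lam + 2) * (lam - 2) := mul_pos hl2 hlm2
  have hr : (0:ℝ) < 4 / ((lam + 2) * (lam - 2)) := by positivity
  rw [hE1, closure_ball _ (ne_of_gt hr)] at hz
  have hzc : ‖z - (((2 * lam) / ((lam + 2) * (lam - 2)) : ℝ) : ℂ)‖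
      ≤ 4 / ((lam + 2) * (lam - 2)) := by
    simpa [Metric.mem_closedBall, dist_eq_norm] using hz
  -- lower bound on |z|
  have hzlb : 2 / (lam + 2) ≤ ‖z‖ := by
    have h1 : ‖(((2 * lam) / ((lam + 2) * (lam - 2)) : ℝ) : ℂ)‖ - ‖z‖
        ≤ ‖(((2 * lam) / ((lam + 2) * (lam - 2)) : ℝ) : ℂ) - z‖ :=
      norm_sub_norm_le _ _
    rw [norm_sub_rev] at h1
    have h3 : ‖(((2 * lam) / ((lam + 2) * (lam - 2)) : ℝ) : ℂ)‖
        = (2 * lam) / ((lam + 2) * (lam - 2)) := by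
      rw [Complex.norm_real, Real.norm_eq_abs, abs_of_pos (by positivity)]
    rw [h3] at h1
    have h4 : (2 * lam) / ((lam + 2) * (lam - 2)) - 4 / ((lam + 2) * (lam - 2))
        = 2 / (lam + 2) := by
      field_simp
      ring
    have : ‖z‖ = ‖z‖ := rfl
    rw [this]
    linarith
  -- key lower bound on denominators
  have key : ∀ n : ℕ, 1 ≤ n →
      (n : ℝ) * ((lam - 2) / (lam + 2)) ≤ ‖(1 : ℂ) - (n : ℂ) * lam * z‖ := by
    intro n hn
    have hn1 : (1:ℝ) ≤ (n:ℝ) := by exact_mod_cast hn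
    have hw : ‖(n : ℂ) * (lam:ℂ) * z‖ = (n:ℝ) * lam * ‖z‖ := by
      simp [norm_mul, Complex.norm_real, abs_of_pos (by linarith : (0:ℝ) < lam)]
    have h1 : ‖(n : ℂ) * (lam:ℂ) * z‖ - ‖(1:ℂ)‖ ≤ ‖(n : ℂ) * (lam:ℂ) * z - 1‖ :=
      norm_sub_norm_le _ _
    rw [norm_sub_rev, hw, norm_one] at h1
    have hz1 : (n:ℝ) * lam * (2 / (lam + 2)) ≤ (n:ℝ) * lam * ‖z‖ :=
      mul_le_mul_of_nonneg_left hzlb (by positivity)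
    have goal : (n : ℝ) * ((lam - 2) / (lam + 2)) ≤ (n:ℝ) * lam * (2 / (lam + 2)) - 1 := by
      have e1 : (n : ℝ) * ((lam - 2) / (lam + 2)) = ((n:ℝ) * (lam - 2)) / (lam + 2) := by
        ring
      have e2 : (n:ℝ) * lam * (2 / (lam + 2)) - 1
          = ((n:ℝ) * lam * 2 - (lam + 2)) / (lam + 2) := by
        field_simp
      rw [e1, e2, div_le_div_iff₀ hl2 hl2]
      nlinarith [mul_nonneg (sub_nonneg.mpr hn1) hl2.le]
    have habs : ‖(1 : ℂ) - (n : ℂ) * lam * z‖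
        = ‖(1:ℂ) - (n : ℂ) * (lam:ℂ) * z‖ := rfl
    rw [habs]
    linarith
  have hq : (0:ℝ) < (lam - 2) / (lam + 2) := by positivity
  -- nonvanishing
  have nonvanish : ∀ n : ℕ, 1 ≤ n → (1 : ℂ) - (n : ℂ) * lam * z ≠ 0 := by
    intro n hn h0
    have hn1 : (1:ℝ) ≤ (n:ℝ) := by exact_mod_cast hn
    have := key n hn
    rw [h0] at this
    simp only [norm_zero] at this
    nlinarith
  -- general summability
  have main : ∀ σ' : ℝ, 1 / 2 < σ' → Summable (fun n : ℕ =>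
      (‖(1 : ℂ) - ((n : ℂ) + 1) * lam * z‖) ^ (-(2 * σ'))) := by
    intro σ' hσ'
    have hsum0 : Summable (fun n : ℕ => ((n:ℝ) + 1) ^ (-(2 * σ'))) := by
      have h : Summable (fun n : ℕ => (n:ℝ) ^ (-(2 * σ'))) :=
        Real.summable_nat_rpow.mpr (by linarith)
      have := (summable_nat_add_iff 1).mpr h
      refine this.congr fun n => ?_
      push_cast
      ring_nf
    have hsum : Summable (fun n : ℕ =>
        (((n:ℝ) + 1) * ((lam - 2) / (lam + 2))) ^ (-(2 * σ'))) := by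
      refine (hsum0.mul_right (((lam - 2) / (lam + 2)) ^ (-(2 * σ')))).congr fun n => ?_
      rw [Real.mul_rpow (by positivity) hq.le]
    refine Summable.of_nonneg_of_le (fun n => by positivity) (fun n => ?_) hsum
    have hcast : ((n : ℂ) + 1) = ((n + 1 : ℕ) : ℂ) := by push_cast; ring
    have hk := key (n + 1) (Nat.le_add_left 1 n)
    rw [hcast]
    have hlb : ((n:ℝ) + 1) * ((lam - 2) / (lam + 2))
        ≤ ‖(1 : ℂ) - ((n + 1 : ℕ) : ℂ) * lam * z‖ := by
      have : ((n + 1 : ℕ) : ℝ) = (n:ℝ) + 1 := by push_cast; ring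
      rw [← this]
      exact hk
    exact Real.rpow_le_rpow_of_nonpos (by positivity) hlb (by linarith)
  exact ⟨nonvanish, main σ hσ, fun s hs => main s.re hs⟩
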